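/- Let p be an odd prime, let ε, ε' ∈ 𝔽_p both be non-squares. Then the Cartan non-split groups Γ_ns^ε(p) and Γ_ns^{ε'}(p) are conjugate subgroups of SL₂(ℤ): there exists A ∈ SL₂(ℤ) with A⁻¹ · Γ_ns^ε(p) · A = Γ_ns^{ε'}(p). -/

import Mathlib

open Matrix

/-- The Cartan non-split ring mod `p`: the set of matrices `(a b; c d)` over `𝔽_p`
with `a = d` and `c = ε * b`. -/
def CnsSet (p : ℕ) (ε : ZMod p) : Set (Matrix (Fin 2) (Fin 2) (ZMod p)) :=
  {A | A 0 0 = A 1 1 ∧ A 1 0 = ε * A 0 1}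

lemma cns_one (p : ℕ) (ε : ZMod p) : (1 : Matrix (Fin 2) (Fin 2) (ZMod p)) ∈ CnsSet p ε := by
  simp [CnsSet, Matrix.one_apply]

lemma cns_mul {p : ℕ} {ε : ZMod p} {A B : Matrix (Fin 2) (Fin 2) (ZMod p)}
    (hA : A ∈ CnsSet p ε) (hB : B ∈ CnsSet p ε) : A * B ∈ CnsSet p ε := by
  obtain ⟨hA1, hA2⟩ := hA
  obtain ⟨hB1, hB2⟩ := hB
  constructor <;>
    · simp only [Matrix.mul_apply, Fin.sum_univ_two, hA1, hA2, hB1, hB2]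
      ring

lemma cns_adj {p : ℕ} {ε : ZMod p} {A : Matrix (Fin 2) (Fin 2) (ZMod p)}
    (hA : A ∈ CnsSet p ε) : A.adjugate ∈ CnsSet p ε := by
  obtain ⟨hA1, hA2⟩ := hA
  rw [Matrix.adjugate_fin_two]
  refine ⟨by simp [hA1], by simp [hA2]⟩

/-- Reduction modulo `p` on `SL₂`. -/
def redSL (p : ℕ) :
    Matrix.SpecialLinearGroup (Fin 2) ℤ →* Matrix.SpecialLinearGroup (Fin 2) (ZMod p) :=
  Matrix.SpecialLinearGroup.map (Int.castRingHom (ZMod p))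

/-- The determinant-one part of the Cartan non-split ring, as a subgroup of `SL₂(𝔽_p)`. -/
def CnsSL (p : ℕ) (ε : ZMod p) : Subgroup (Matrix.SpecialLinearGroup (Fin 2) (ZMod p)) where
  carrier := {A | (A : Matrix (Fin 2) (Fin 2) (ZMod p)) ∈ CnsSet p ε}
  one_mem' := by simpa using cns_one p ε
  mul_mem' := by
    intro A B hA hB
    simpa using cns_mul hA hB
  inv_mem' := by
    intro A hA
    simp only [Set.mem_setOf_eq, Matrix.SpecialLinearGroup.coe_inv] at hA ⊢
    exact cns_adj hA

/-- The Cartan non-split group `Γ_ns^ε(p)`: the subgroup of `SL₂(ℤ)` of matrices whose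
reduction modulo `p` lies in the Cartan non-split ring. -/
def GammaNs (p : ℕ) (ε : ZMod p) : Subgroup (Matrix.SpecialLinearGroup (Fin 2) ℤ) :=
  (CnsSL p ε).comap (redSL p)


section Aux

lemma aux_sq {p : ℕ} [Fact p.Prime] (ε ε' : ZMod p)
    (hε : ¬ IsSquare ε) (hε' : ¬ IsSquare ε') : ∃ l : ZMod p, l ^ 2 * ε' = ε := by
  have hε0 : ε ≠ 0 := fun h => hε (h ▸ ⟨0, by simp⟩)
  have hε'0 : ε' ≠ 0 := fun h => hε' (h ▸ ⟨0, by simp⟩)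
  have h1 : quadraticChar (ZMod p) (ε * ε') = 1 := by
    rw [_root_.map_mul, quadraticChar_neg_one_iff_not_isSquare.mpr hε,
      quadraticChar_neg_one_iff_not_isSquare.mpr hε']
    ring
  have hs : IsSquare (ε * ε') :=
    (quadraticChar_one_iff_isSquare (mul_ne_zero hε0 hε'0)).mp h1
  obtain ⟨r, hr⟩ := hs
  refine ⟨r * ε'⁻¹, ?_⟩
  have h2 : ε' * ε'⁻¹ = 1 := mul_inv_cancel₀ hε'0
  linear_combination (-(ε'⁻¹ ^ 2 * ε')) * hr + (ε * (ε' * ε'⁻¹ + 1)) * h2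

lemma aux_form {p : ℕ} [Fact p.Prime] (hp : Odd p) (e c : ZMod p) (he : e ≠ 0) :
    ∃ a b : ZMod p, a ^ 2 - e * b ^ 2 = c := by
  obtain ⟨a, b, hab⟩ := FiniteField.exists_root_sum_quadratic
    (f := Polynomial.X ^ 2 - Polynomial.C c) (g := Polynomial.C (-e) * Polynomial.X ^ 2)
    (by rw [Polynomial.degree_X_pow_sub_C (by norm_num : 0 < 2) c]; rfl)
    (by rw [Polynomial.degree_C_mul_X_pow _ (neg_ne_zero.mpr he)]; rfl)
    (by rwa [ZMod.card, ← Nat.odd_iff])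
  refine ⟨a, b, ?_⟩
  simp only [Polynomial.eval_add, Polynomial.eval_sub, Polynomial.eval_mul, Polynomial.eval_pow,
    Polynomial.eval_X, Polynomial.eval_C] at hab
  linear_combination hab

lemma aux_coprime_lift' {p : ℕ} [Fact p.Prime] (cb db : ZMod p) (hd : db ≠ 0) :
    ∃ c d : ℤ, (c : ZMod p) = cb ∧ (d : ZMod p) = db ∧ IsCoprime c d := by
  obtain ⟨d, hdd⟩ := ZMod.intCast_surjective db
  obtain ⟨s, hss⟩ := ZMod.intCast_surjective ((cb - 1) * db⁻¹)
  refine ⟨1 + d * s, d, ?_, hdd, ⟨1, -s, by ring⟩⟩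
  push_cast
  rw [hdd, hss]
  have h2 : db * db⁻¹ = 1 := mul_inv_cancel₀ hd
  linear_combination (cb - 1) * h2

lemma aux_coprime_lift {p : ℕ} [Fact p.Prime] (cb db : ZMod p) (h : ¬(cb = 0 ∧ db = 0)) :
    ∃ c d : ℤ, (c : ZMod p) = cb ∧ (d : ZMod p) = db ∧ IsCoprime c d := by
  by_cases hd : db = 0
  · have hc : cb ≠ 0 := fun hc => h ⟨hc, hd⟩
    obtain ⟨d, c, h1, h2, h3⟩ := aux_coprime_lift' db cb hc
    exact ⟨c, d, h2, h1, h3.symm⟩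
  · exact aux_coprime_lift' cb db hd

lemma aux_redSL_surjective (p : ℕ) [Fact p.Prime] : Function.Surjective (redSL p) := by
  intro M
  have hdet : (M : Matrix (Fin 2) (Fin 2) (ZMod p)).det = 1 := M.2
  rw [Matrix.det_fin_two] at hdet
  have hcd : ¬((M : Matrix (Fin 2) (Fin 2) (ZMod p)) 1 0 = 0 ∧
      (M : Matrix (Fin 2) (Fin 2) (ZMod p)) 1 1 = 0) := by
    rintro ⟨h1, h2⟩
    rw [h1, h2] at hdet
    simp at hdet
  obtain ⟨c, d, hc, hd, hcop⟩ := aux_coprime_lift _ _ hcd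
  obtain ⟨a₀, ha₀⟩ := ZMod.intCast_surjective ((M : Matrix (Fin 2) (Fin 2) (ZMod p)) 0 0)
  obtain ⟨b₀, hb₀⟩ := ZMod.intCast_surjective ((M : Matrix (Fin 2) (Fin 2) (ZMod p)) 0 1)
  have hk : (p : ℤ) ∣ a₀ * d - b₀ * c - 1 := by
    rw [← ZMod.intCast_zmod_eq_zero_iff_dvd]
    push_cast
    rw [ha₀, hb₀, hc, hd]
    linear_combination hdet
  obtain ⟨m, hm⟩ := hk
  obtain ⟨u, v, huv⟩ := hcop
  refine ⟨⟨!![a₀ - p * m * v, b₀ + p * m * u; c, d], ?_⟩, ?_⟩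
  · rw [Matrix.det_fin_two_of]
    linear_combination hm - (p * m) * huv
  · ext i j
    change (((!![a₀ - p * m * v, b₀ + p * m * u; c, d] : Matrix (Fin 2) (Fin 2) ℤ) i j : ℤ) : ZMod p) = _
    fin_cases i <;> fin_cases j <;>
      simp [redSL, Matrix.SpecialLinearGroup.map, MonoidHom.coe_mk, OneHom.coe_mk, ha₀, hb₀, hc, hd, hm]

lemma aux_conj1 {p : ℕ} (l e a b : ZMod p) (N : Matrix (Fin 2) (Fin 2) (ZMod p))
    (hN : N ∈ CnsSet p (l ^ 2 * e)) :
    !![l * a, -b; -(l * e * b), a] * N * !![a, b; l * e * b, l * a] ∈ CnsSet p e := by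
  obtain ⟨h1, h2⟩ := hN
  constructor <;>
    · simp [Matrix.mul_apply, Matrix.vecMul, Matrix.vecHead, Matrix.vecTail,
        dotProduct, Fin.sum_univ_two, h1, h2]
      ring

lemma aux_conj2 {p : ℕ} (l e a b : ZMod p) (N : Matrix (Fin 2) (Fin 2) (ZMod p))
    (hN : N ∈ CnsSet p e) :
    !![a, b; l * e * b, l * a] * N * !![l * a, -b; -(l * e * b), a] ∈ CnsSet p (l ^ 2 * e) := by
  obtain ⟨h1, h2⟩ := hN
  constructor <;>
    · simp [Matrix.mul_apply, Matrix.vecMul, Matrix.vecHead, Matrix.vecTail,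
        dotProduct, Fin.sum_univ_two, h1, h2]
      ring

end Aux

/-- Any two Cartan non-split groups (for two non-squares `ε, ε'` mod `p`) are conjugate
in `SL₂(ℤ)`. -/
theorem cartan_groups_conjugate (p : ℕ) [Fact p.Prime] (hp : Odd p)
    (ε ε' : ZMod p) (hε : ¬ IsSquare ε) (hε' : ¬ IsSquare ε') :
    ∃ A : Matrix.SpecialLinearGroup (Fin 2) ℤ,
      (fun g => A⁻¹ * g * A) '' (GammaNs p ε : Set (Matrix.SpecialLinearGroup (Fin 2) ℤ))
        = (GammaNs p ε' : Set (Matrix.SpecialLinearGroup (Fin 2) ℤ)) := by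
  obtain ⟨l, hl⟩ := aux_sq ε ε' hε hε'
  have hε0 : ε ≠ 0 := fun h => hε (h ▸ ⟨0, by simp⟩)
  have hε'0 : ε' ≠ 0 := fun h => hε' (h ▸ ⟨0, by simp⟩)
  have hl0 : l ≠ 0 := by
    intro h
    rw [h] at hl
    simp at hl
    exact hε0 hl.symm
  obtain ⟨a, b, hab⟩ := aux_form hp ε' l⁻¹ hε'0
  have hdet1 : (!![a, b; l * ε' * b, l * a] : Matrix (Fin 2) (Fin 2) (ZMod p)).det = 1 := by
    rw [Matrix.det_fin_two_of]
    have h2 : l * l⁻¹ = 1 := mul_inv_cancel₀ hl0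
    linear_combination l * hab + h2
  obtain ⟨A, hA⟩ := aux_redSL_surjective p ⟨_, hdet1⟩
  have hmem : ∀ (δ : ZMod p) (x : Matrix.SpecialLinearGroup (Fin 2) ℤ),
      x ∈ GammaNs p δ ↔
        ((redSL p x : Matrix.SpecialLinearGroup (Fin 2) (ZMod p)) :
          Matrix (Fin 2) (Fin 2) (ZMod p)) ∈ CnsSet p δ := fun _ _ => Iff.rfl
  refine ⟨A, Set.ext fun g => ?_⟩
  simp only [Set.mem_image, SetLike.mem_coe]
  constructor
  · rintro ⟨x, hx, rfl⟩
    rw [hmem] at hx ⊢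
    have hred : ((redSL p (A⁻¹ * x * A) : Matrix.SpecialLinearGroup (Fin 2) (ZMod p)) :
        Matrix (Fin 2) (Fin 2) (ZMod p))
        = !![l * a, -b; -(l * ε' * b), a] *
            ((redSL p x : Matrix.SpecialLinearGroup (Fin 2) (ZMod p)) :
              Matrix (Fin 2) (Fin 2) (ZMod p)) * !![a, b; l * ε' * b, l * a] := by
      rw [_root_.map_mul, _root_.map_mul, map_inv, Matrix.SpecialLinearGroup.coe_mul,
        Matrix.SpecialLinearGroup.coe_mul, Matrix.SpecialLinearGroup.coe_inv, hA]
      rw [show ((⟨!![a, b; l * ε' * b, l * a], hdet1⟩ :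
          Matrix.SpecialLinearGroup (Fin 2) (ZMod p)) :
          Matrix (Fin 2) (Fin 2) (ZMod p)) = !![a, b; l * ε' * b, l * a] from rfl]
      rw [Matrix.adjugate_fin_two_of]
    rw [hred]
    rw [← hl] at hx
    exact aux_conj1 l ε' a b _ hx
  · intro hg
    refine ⟨A * g * A⁻¹, ?_, by group⟩
    rw [hmem] at hg ⊢
    have hred : ((redSL p (A * g * A⁻¹) : Matrix.SpecialLinearGroup (Fin 2) (ZMod p)) :
        Matrix (Fin 2) (Fin 2) (ZMod p))
        = !![a, b; l * ε' * b, l * a] *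
            ((redSL p g : Matrix.SpecialLinearGroup (Fin 2) (ZMod p)) :
              Matrix (Fin 2) (Fin 2) (ZMod p)) * !![l * a, -b; -(l * ε' * b), a] := by
      rw [_root_.map_mul, _root_.map_mul, map_inv, Matrix.SpecialLinearGroup.coe_mul,
        Matrix.SpecialLinearGroup.coe_mul, Matrix.SpecialLinearGroup.coe_inv, hA]
      rw [show ((⟨!![a, b; l * ε' * b, l * a], hdet1⟩ :
          Matrix.SpecialLinearGroup (Fin 2) (ZMod p)) :
          Matrix (Fin 2) (Fin 2) (ZMod p)) = !![a, b; l * ε' * b, l * a] from rfl]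
      rw [Matrix.adjugate_fin_two_of]
    rw [hred, ← hl]
    exact aux_conj2 l ε' a b _ hg
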